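/- Let r ≥ 3, c = C(r,2)+1, and n ≥ c. If N ≤ (1 + 1/r²)^{n-1}, then there exists a c-coloring of the r-element subsets of an N-element set with no monochromatic Berge copy of K_n. Consequently, the Berge-Ramsey number R_r(Berge-K_n; c) exceeds (1 + 1/r²)^{n-1}. -/

import Mathlib

/-- `χ` contains a monochromatic Berge copy of `K_n`: an `n`-element core `S` and an
injective assignment of same-colored `r`-sets `E u v ⊇ {u,v}` to pairs of `S`. -/
def HasMonoBerge (r n c N : ℕ) (χ : Finset (Fin N) → Fin c) : Prop :=
  ∃ (S : Finset (Fin N)) (k : Fin c) (E : Fin N → Fin N → Finset (Fin N)),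
    S.card = n ∧
    (∀ u ∈ S, ∀ v ∈ S, u ≠ v →
      (E u v).card = r ∧ u ∈ E u v ∧ v ∈ E u v ∧ χ (E u v) = k ∧ E u v = E v u) ∧
    (∀ u ∈ S, ∀ v ∈ S, ∀ u' ∈ S, ∀ v' ∈ S, u ≠ v → u' ≠ v' →
      E u v = E u' v' → ({u, v} : Finset (Fin N)) = {u', v'})

/-- The Berge-Ramsey number `R_r(Berge-K_n; c)`. -/
noncomputable def bergeRamsey (r n c : ℕ) : ℕ :=
  sInf {N | ∀ χ : Finset (Fin N) → Fin c, HasMonoBerge r n c N χ}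

open Finset


lemma card_avoid {α : Type*} [Fintype α] [DecidableEq α] (c : ℕ) (A : Finset α) (k : Fin c) :
    (Finset.univ.filter (fun h : α → Fin c => ∀ p ∈ A, h p ≠ k)).card
      = (c - 1) ^ A.card * c ^ (Fintype.card α - A.card) := by
  classical
  have hset : Finset.univ.filter (fun h : α → Fin c => ∀ p ∈ A, h p ≠ k)
      = Fintype.piFinset (fun a => if a ∈ A then Finset.univ.erase k else Finset.univ) := by
    ext h
    simp only [Fintype.mem_piFinset, mem_filter, mem_univ, true_and]
    constructor
    · intro H a
      by_cases ha : a ∈ A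
      · simp [ha, Finset.mem_erase, H a ha]
      · simp [ha]
    · intro H p hp
      have := H p
      simp only [hp, if_true, Finset.mem_erase] at this
      exact this.1
  rw [hset, Fintype.card_piFinset]
  have hcard : ∀ a : α, ((if a ∈ A then Finset.univ.erase k else Finset.univ).card : ℕ)
      = if a ∈ A then c - 1 else c := by
    intro a
    by_cases ha : a ∈ A <;>
      simp [ha, Finset.card_erase_of_mem, Finset.card_univ]
  rw [Finset.prod_congr rfl (fun a _ => hcard a), Finset.prod_ite]
  simp only [Finset.prod_const]
  have h1 : Finset.univ.filter (fun a => a ∈ A) = A := by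
    ext a; simp
  have h2 : (Finset.univ.filter (fun a => a ∉ A)).card = Fintype.card α - A.card := by
    have : Finset.univ.filter (fun a => a ∉ A) = Aᶜ := by ext a; simp
    rw [this, Finset.card_compl]
  rw [h1, h2]

lemma exists_good_h (N n c : ℕ) (hc : 0 < c)
    (hineq : N.choose n * c * (c - 1) ^ n.choose 2 < c ^ n.choose 2) :
    ∃ h : Finset (Fin N) → Fin c, ∀ S : Finset (Fin N), S.card = n →
      ∀ k : Fin c, ∃ p ∈ S.powersetCard 2, h p = k := by
  classical
  set q := n.choose 2 with hq
  set M := Fintype.card (Finset (Fin N)) with hM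
  set bad : Finset (Finset (Fin N) → Fin c) :=
    (Finset.univ.powersetCard n).biUnion (fun S =>
      (Finset.univ : Finset (Fin c)).biUnion (fun k =>
        Finset.univ.filter (fun h : Finset (Fin N) → Fin c => ∀ p ∈ S.powersetCard 2, h p ≠ k)))
    with hbad
  have hinner : ∀ S ∈ Finset.univ.powersetCard n,
      ((Finset.univ : Finset (Fin c)).biUnion (fun k =>
        Finset.univ.filter (fun h : Finset (Fin N) → Fin c =>
          ∀ p ∈ S.powersetCard 2, h p ≠ k))).card ≤ c * ((c - 1) ^ q * c ^ (M - q)) := by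
    intro S hS
    have hScard : S.card = n := (Finset.mem_powersetCard_univ.mp hS)
    refine le_trans Finset.card_biUnion_le (le_of_eq ?_)
    have hA : (S.powersetCard 2).card = q := by
      rw [Finset.card_powersetCard, hScard]
    calc ∑ k : Fin c, (Finset.univ.filter (fun h : Finset (Fin N) → Fin c =>
            ∀ p ∈ S.powersetCard 2, h p ≠ k)).card
        = ∑ _k : Fin c, (c - 1) ^ q * c ^ (M - q) := by
          refine Finset.sum_congr rfl (fun k _ => ?_)
          rw [card_avoid, hA]
      _ = c * ((c - 1) ^ q * c ^ (M - q)) := by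
          rw [Finset.sum_const, Finset.card_univ, Fintype.card_fin, smul_eq_mul]
  have hbadcard : bad.card ≤ N.choose n * (c * ((c - 1) ^ q * c ^ (M - q))) := by
    refine le_trans Finset.card_biUnion_le ?_
    calc ∑ S ∈ Finset.univ.powersetCard n, _ ≤
        ∑ _S ∈ Finset.univ.powersetCard n, c * ((c - 1) ^ q * c ^ (M - q)) :=
          Finset.sum_le_sum hinner
      _ = N.choose n * (c * ((c - 1) ^ q * c ^ (M - q))) := by
          rw [Finset.sum_const, Finset.card_powersetCard, Finset.card_univ, Fintype.card_fin,
            smul_eq_mul]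
  have hlt : bad.card < Fintype.card (Finset (Fin N) → Fin c) := by
    rw [Fintype.card_fun, Fintype.card_fin, ← hM]
    rcases lt_or_ge N n with hNn | hNn
    · refine lt_of_le_of_lt hbadcard ?_
      rw [Nat.choose_eq_zero_of_lt hNn, Nat.zero_mul]
      exact Nat.pow_pos hc
    · have hqM : q ≤ M := by
        have h1 : q ≤ N.choose 2 := Nat.choose_le_choose 2 hNn
        have h2 : N.choose 2 ≤ 2 ^ N := by
          rcases lt_or_ge 2 (N + 1) with h | h
          · rw [← Nat.sum_range_choose N]
            exact Finset.single_le_sum (fun i _ => Nat.zero_le _) (Finset.mem_range.mpr h)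
          · rw [Nat.choose_eq_zero_of_lt (by omega)]
            exact Nat.zero_le _
        have h3 : M = 2 ^ N := by
          rw [hM, Fintype.card_finset, Fintype.card_fin]
        omega
      refine lt_of_le_of_lt hbadcard ?_
      have : N.choose n * (c * ((c - 1) ^ q * c ^ (M - q)))
          = (N.choose n * c * (c - 1) ^ q) * c ^ (M - q) := by ring
      rw [this]
      calc (N.choose n * c * (c - 1) ^ q) * c ^ (M - q)
          < c ^ q * c ^ (M - q) :=
            Nat.mul_lt_mul_of_lt_of_le hineq le_rfl (Nat.pow_pos hc)
        _ = c ^ M := by rw [← pow_add]; congr 1; omega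
  obtain ⟨h, -, hgood⟩ : ∃ h, h ∈ Finset.univ ∧ h ∉ bad := by
    by_contra hcon
    push_neg at hcon
    have : (Finset.univ : Finset (Finset (Fin N) → Fin c)) ⊆ bad := fun h hh => hcon h hh
    have := Finset.card_le_card this
    rw [Finset.card_univ] at this
    omega
  refine ⟨h, fun S hS k => ?_⟩
  by_contra hnone
  push_neg at hnone
  apply hgood
  rw [hbad]
  refine Finset.mem_biUnion.mpr ⟨S, Finset.mem_powersetCard_univ.mpr hS, ?_⟩
  refine Finset.mem_biUnion.mpr ⟨k, Finset.mem_univ k, ?_⟩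
  simp only [Finset.mem_filter, Finset.mem_univ, true_and]
  exact hnone

lemma two_mul_choose_two (m : ℕ) : 2 * m.choose 2 = m * (m - 1) := by
  induction m with
  | zero => simp
  | succ k ih =>
    rw [Nat.choose_succ_succ k 1, Nat.mul_add, ih, Nat.choose_one_right, Nat.succ_sub_one]
    cases k with
    | zero => simp
    | succ j =>
      simp only [Nat.succ_sub_one]
      ring

lemma key_ineq (r c n N : ℕ) (hr : 3 ≤ r) (hc : c = r.choose 2 + 1) (hn : c ≤ n)
    (hN : (N : ℝ) ≤ (1 + 1 / (r : ℝ) ^ 2) ^ (n - 1)) :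
    N.choose n * c * (c - 1) ^ n.choose 2 < c ^ n.choose 2 := by
  have hc4 : 4 ≤ c := by
    have h1 : 3 ≤ r.choose 2 := by
      have h2 := two_mul_choose_two r
      have h6 : 6 ≤ r * (r - 1) := by
        calc 6 = 3 * 2 := rfl
        _ ≤ r * (r - 1) := Nat.mul_le_mul hr (by omega)
      rw [← h2] at h6
      omega
    omega
  have hn4 : 4 ≤ n := le_trans hc4 hn
  set x : ℝ := (r : ℝ) with hx
  have hx3 : (3 : ℝ) ≤ x := by rw [hx]; exact_mod_cast hr
  have hxpos : (0 : ℝ) < x := by linarith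
  set β : ℝ := 1 + 1 / x ^ 2 with hβ
  have hβpos : (0 : ℝ) < β := by positivity
  have hcR : (c : ℝ) - 1 = x * (x - 1) / 2 := by
    have h2 : (2 : ℝ) * (r.choose 2 : ℝ) = x * (x - 1) := by
      have := two_mul_choose_two r
      have hcast : ((2 * r.choose 2 : ℕ) : ℝ) = ((r * (r - 1) : ℕ) : ℝ) := by exact_mod_cast this
      push_cast [Nat.cast_sub (by omega : 1 ≤ r)] at hcast
      linarith
    have : (c : ℝ) = (r.choose 2 : ℝ) + 1 := by exact_mod_cast hc
    rw [this]; linarith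
  have hkey : β ^ 2 * ((c : ℝ) - 1) ≤ (c : ℝ) := by
    rw [hcR]
    have hc' : (c : ℝ) = x * (x - 1) / 2 + 1 := by linarith
    rw [hc', hβ]
    have hx2 : (0:ℝ) < x ^ 2 := by positivity
    have e : (1 + 1 / x ^ 2) = (x ^ 2 + 1) / x ^ 2 := by field_simp
    rw [e, div_pow, div_mul_eq_mul_div, div_le_iff₀ (by positivity)]
    nlinarith [hx3, hxpos, pow_pos hxpos 3, pow_pos hxpos 4, sq_nonneg x]
  -- now the chain
  set q := n.choose 2 with hq
  have hfac : (c : ℝ) < (n.factorial : ℝ) := by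
    have h1 : n < n.factorial := Nat.lt_factorial_self (by omega)
    have : c < n.factorial := lt_of_le_of_lt hn h1
    exact_mod_cast this
  have hfacpos : (0 : ℝ) < (n.factorial : ℝ) := by positivity
  have h1 : (N.choose n : ℝ) * (n.factorial : ℝ) ≤ (N : ℝ) ^ n := by
    have h := Nat.descFactorial_le_pow N n
    have h2 : N.choose n * n.factorial ≤ N ^ n := by
      rw [Nat.mul_comm]
      have := Nat.descFactorial_eq_factorial_mul_choose N n
      omega
    exact_mod_cast h2
  have hNnn : (N : ℝ) ^ n ≤ (β ^ 2) ^ q := by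
    have h2 : (N : ℝ) ^ n ≤ (β ^ (n - 1)) ^ n := by
      apply pow_le_pow_left₀ (by positivity) hN
    refine le_trans h2 (le_of_eq ?_)
    rw [← pow_mul, ← pow_mul]
    congr 1
    rw [Nat.mul_comm]
    exact (two_mul_choose_two n).symm
  have hcm1 : (0:ℝ) ≤ (c:ℝ) - 1 := by
    have : (1:ℝ) ≤ (c:ℝ) := by exact_mod_cast (by omega : 1 ≤ c)
    linarith
  -- final real inequality
  have hb2c : (0:ℝ) ≤ β ^ 2 * ((c:ℝ) - 1) := by positivity
  have hfin : (N.choose n : ℝ) * (c : ℝ) * ((c : ℝ) - 1) ^ q < (c : ℝ) ^ q := by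
    have hA : ((N.choose n : ℝ) * n.factorial) * ((c:ℝ) * ((c:ℝ) - 1) ^ q)
        ≤ (β ^ 2) ^ q * ((c:ℝ) * ((c:ℝ) - 1) ^ q) :=
      mul_le_mul_of_nonneg_right (le_trans h1 hNnn) (by positivity)
    have hB : (β ^ 2) ^ q * ((c:ℝ) * ((c:ℝ) - 1) ^ q) = (c:ℝ) * (β ^ 2 * ((c:ℝ) - 1)) ^ q := by
      rw [mul_pow]; ring
    have hC : (β ^ 2 * ((c:ℝ) - 1)) ^ q ≤ (c:ℝ) ^ q := pow_le_pow_left₀ hb2c hkey q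
    have hcpos : (0:ℝ) < (c:ℝ) := by positivity
    have hD : (c:ℝ) * (β ^ 2 * ((c:ℝ) - 1)) ^ q ≤ (c:ℝ) * (c:ℝ) ^ q :=
      mul_le_mul_of_nonneg_left hC (le_of_lt hcpos)
    have hE : (c:ℝ) * (c:ℝ) ^ q < (n.factorial : ℝ) * (c:ℝ) ^ q :=
      mul_lt_mul_of_pos_right hfac (by positivity)
    have : (n.factorial : ℝ) * ((N.choose n : ℝ) * (c:ℝ) * ((c:ℝ) - 1) ^ q)
        < (n.factorial : ℝ) * (c:ℝ) ^ q := by nlinarith [hA, hB, hC, hD, hE]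
    exact lt_of_mul_lt_mul_left this (le_of_lt hfacpos)
  have hcast : ((c:ℝ) - 1) = ((c - 1 : ℕ) : ℝ) := by
    push_cast [Nat.cast_sub (by omega : 1 ≤ c)]
    ring
  rw [hcast] at hfin
  exact_mod_cast hfin

lemma part1 (r c n N : ℕ) (hr : 3 ≤ r) (hc : c = r.choose 2 + 1) (hn : c ≤ n)
    (hN : (N : ℝ) ≤ (1 + 1 / (r : ℝ) ^ 2) ^ (n - 1)) :
    ∃ χ : Finset (Fin N) → Fin c, ¬ HasMonoBerge r n c N χ := by
  classical
  have hc0 : 0 < c := by omega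
  obtain ⟨h, hh⟩ := exists_good_h N n c hc0 (key_ineq r c n N hr hc hn hN)
  -- the coloring: pick a color not used by h on pairs of e
  set av : Finset (Fin N) → Finset (Fin c) :=
    fun e => (Finset.univ : Finset (Fin c)) \ ((e.powersetCard 2).image h) with hav
  set χ : Finset (Fin N) → Fin c :=
    fun e => if hne : (av e).Nonempty then (av e).min' hne else ⟨0, hc0⟩ with hχ
  have hχav : ∀ e : Finset (Fin N), e.card = r → χ e ∉ (e.powersetCard 2).image h := by
    intro e he
    have hne : (av e).Nonempty := by
      rw [hav]
      rw [Finset.sdiff_nonempty]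
      intro hsub
      have h1 : ((e.powersetCard 2).image h).card ≤ r.choose 2 := by
        refine le_trans (Finset.card_image_le) ?_
        rw [Finset.card_powersetCard, he]
      have h2 := Finset.card_le_card hsub
      rw [Finset.card_univ, Fintype.card_fin] at h2
      omega
    have : χ e ∈ av e := by
      rw [hχ]
      simp only [hne, dif_pos]
      exact (av e).min'_mem hne
    rw [hav] at this
    exact (Finset.mem_sdiff.mp this).2
  refine ⟨χ, ?_⟩
  rintro ⟨S, k, E, hScard, hE, -⟩
  obtain ⟨p, hpS, hpk⟩ := hh S hScard k
  rw [Finset.mem_powersetCard] at hpS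
  obtain ⟨hpsub, hp2⟩ := hpS
  obtain ⟨u, v, huv, rfl⟩ := Finset.card_eq_two.mp hp2
  have hu : u ∈ S := hpsub (by simp)
  have hv : v ∈ S := hpsub (by simp)
  obtain ⟨hcard, huE, hvE, hχE, -⟩ := hE u hu v hv huv
  apply hχav (E u v) hcard
  rw [hχE, ← hpk]
  refine Finset.mem_image.mpr ⟨{u, v}, ?_, rfl⟩
  rw [Finset.mem_powersetCard]
  refine ⟨?_, hp2⟩
  intro x hx
  rcases Finset.mem_insert.mp hx with rfl | hx
  · exact huE
  · rw [Finset.mem_singleton.mp hx]; exact hvE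

lemma ramsey_exists (c : ℕ) (hc : 0 < c) :
    ∀ s : ℕ, ∀ q : Fin c → ℕ, (∑ k, q k) = s →
      ∃ R : ℕ, ∀ f : Fin R → Fin R → Fin c,
        ∃ (k : Fin c) (S : Finset (Fin R)), S.card = q k ∧
          ∀ u ∈ S, ∀ v ∈ S, u < v → f u v = k := by
  intro s
  induction s using Nat.strong_induction_on with
  | _ s IH =>
    intro q hq
    by_cases h0 : ∃ k, q k = 0
    · obtain ⟨k, hk⟩ := h0
      exact ⟨0, fun f => ⟨k, ∅, by simp [hk], by simp⟩⟩
    · push_neg at h0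
      have hs1 : 1 ≤ s := by
        have hk0 : q ⟨0, hc⟩ ≤ ∑ k, q k := Finset.single_le_sum (fun i _ => Nat.zero_le _)
          (Finset.mem_univ _)
        have := h0 ⟨0, hc⟩
        omega
      have hsum : ∀ k : Fin c, (∑ k', Function.update q k (q k - 1) k') = s - 1 := by
        intro k
        rw [Finset.sum_update_of_mem (Finset.mem_univ k), ← Finset.erase_eq]
        have h2 : q k + ∑ k' ∈ Finset.univ.erase k, q k' = s := by
          rw [Finset.add_sum_erase _ q (Finset.mem_univ k)]
          exact hq
        have := h0 k
        omega
      have hIH : ∀ k : Fin c, ∃ R : ℕ, ∀ f : Fin R → Fin R → Fin c,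
          ∃ (k' : Fin c) (S : Finset (Fin R)), S.card = Function.update q k (q k - 1) k' ∧
            ∀ u ∈ S, ∀ v ∈ S, u < v → f u v = k' :=
        fun k => IH (s - 1) (by omega) _ (hsum k)
      choose Rk hRk using hIH
      refine ⟨(∑ k, Rk k) + 1, ?_⟩
      intro f
      classical
      set P : Finset (Fin ((∑ k, Rk k) + 1)) := Finset.univ.erase 0 with hP
      have hPcard : P.card = ∑ k, Rk k := by
        rw [hP, Finset.card_erase_of_mem (Finset.mem_univ _), Finset.card_univ,
          Fintype.card_fin]
        omega
      set T : Fin c → Finset (Fin ((∑ k, Rk k) + 1)) :=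
        fun k => P.filter (fun u => f 0 u = k) with hT
      have hPT : P = Finset.univ.biUnion T := by
        ext u
        simp only [Finset.mem_biUnion, Finset.mem_univ, true_and, hT, Finset.mem_filter]
        constructor
        · intro hu; exact ⟨f 0 u, hu, rfl⟩
        · rintro ⟨k, hu, -⟩; exact hu
      have hple : ∑ k, Rk k ≤ ∑ k, (T k).card := by
        calc ∑ k, Rk k = P.card := hPcard.symm
          _ ≤ ∑ k, (T k).card := by rw [hPT]; exact Finset.card_biUnion_le
      have hk0 : ∃ k, Rk k ≤ (T k).card := by
        by_contra hno
        push_neg at hno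
        have : ∑ k, (T k).card < ∑ k, Rk k :=
          Finset.sum_lt_sum_of_nonempty (Finset.univ_nonempty_iff.mpr ⟨⟨0, hc⟩⟩)
            (fun k _ => hno k)
        omega
      obtain ⟨k0, hk0⟩ := hk0
      obtain ⟨U, hUsub, hUcard⟩ := Finset.exists_subset_card_eq hk0
      set e := U.orderEmbOfFin hUcard with he
      obtain ⟨k1, S1, hS1card, hS1mono⟩ := hRk k0 (fun x y => f (e x) (e y))
      have hemem : ∀ i, e i ∈ T k0 := fun i => hUsub (Finset.orderEmbOfFin_mem U hUcard i)
      have hene : ∀ i, e i ≠ 0 := by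
        intro i h
        have := hemem i
        rw [hT, Finset.mem_filter, hP] at this
        exact (Finset.mem_erase.mp this.1).1 h
      have hecol : ∀ i, f 0 (e i) = k0 := by
        intro i
        have := hemem i
        rw [hT, Finset.mem_filter] at this
        exact this.2
      by_cases hxk : k1 = k0
      · subst hxk
        refine ⟨k1, insert 0 (S1.image (fun i => e i)), ?_, ?_⟩
        · rw [Finset.card_insert_of_notMem, Finset.card_image_of_injective _
            (e.injective), hS1card, Function.update_self]
          · have := h0 k1; omega
          · intro hmem
            obtain ⟨i, -, hi⟩ := Finset.mem_image.mp hmem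
            exact hene i hi
        · intro u hu v hv huv
          rcases Finset.mem_insert.mp hu with rfl | hu
          · rcases Finset.mem_insert.mp hv with rfl | hv
            · exact absurd huv (lt_irrefl _)
            · obtain ⟨j, -, rfl⟩ := Finset.mem_image.mp hv
              exact hecol j
          · rcases Finset.mem_insert.mp hv with rfl | hv
            · exact absurd huv (by simp [Fin.not_lt_zero]) -- u < 0 impossible
            · obtain ⟨i, hi, rfl⟩ := Finset.mem_image.mp hu
              obtain ⟨j, hj, rfl⟩ := Finset.mem_image.mp hv
              exact hS1mono i hi j hj (by exact e.lt_iff_lt.mp huv)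
      · refine ⟨k1, S1.image (fun i => e i), ?_, ?_⟩
        · rw [Finset.card_image_of_injective _ e.injective, hS1card,
            Function.update_of_ne hxk]
        · intro u hu v hv huv
          obtain ⟨i, hi, rfl⟩ := Finset.mem_image.mp hu
          obtain ⟨j, hj, rfl⟩ := Finset.mem_image.mp hv
          exact hS1mono i hi j hj (e.lt_iff_lt.mp huv)

abbrev embF (R m : ℕ) : Fin R → Fin (R + m) := fun u => Fin.castAdd m u

abbrev decoys (R m : ℕ) : Finset (Fin (R + m)) :=
  (Finset.univ : Finset (Fin m)).image (fun i => Fin.natAdd R i)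

lemma exists_upper (r c n : ℕ) (hr : 3 ≤ r) (hc : 0 < c) :
    ∃ N0 : ℕ, ∀ χ : Finset (Fin N0) → Fin c, HasMonoBerge r n c N0 χ := by
  classical
  obtain ⟨R, hR⟩ := ramsey_exists c hc (∑ _k : Fin c, n) (fun _ => n) rfl
  refine ⟨R + (r - 2), ?_⟩
  intro χ
  have hnatAdd_inj : Function.Injective
      (fun i : Fin (r - 2) => (Fin.natAdd R i : Fin (R + (r - 2)))) := by
    intro i j hij
    have : R + (i : ℕ) = R + (j : ℕ) := by
      have := congrArg Fin.val hij
      simpa using this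
    exact Fin.ext (by omega)
  have hAcard : (decoys R (r - 2)).card = r - 2 := by
    rw [decoys, Finset.card_image_of_injective _ hnatAdd_inj, Finset.card_univ,
      Fintype.card_fin]
  have hAval : ∀ x ∈ decoys R (r - 2), R ≤ (x : ℕ) := by
    intro x hx
    rw [decoys, Finset.mem_image] at hx
    obtain ⟨i, -, rfl⟩ := hx
    simp [Fin.natAdd]
  have hembval : ∀ u : Fin R, ((embF R (r - 2) u : Fin (R + (r - 2))) : ℕ) = (u : ℕ) :=
    fun u => rfl
  have hembinj : Function.Injective (embF R (r - 2)) := by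
    intro u v huv
    exact Fin.ext (by rw [← hembval u, ← hembval v, huv])
  have hembA : ∀ u : Fin R, embF R (r - 2) u ∉ decoys R (r - 2) := by
    intro u hu
    have h1 := hAval _ hu
    rw [hembval] at h1
    exact absurd h1 (not_le.mpr u.isLt)
  obtain ⟨k, S1, hS1card, hS1mono⟩ := hR (fun u v =>
    χ (insert (embF R (r - 2) u) (insert (embF R (r - 2) v) (decoys R (r - 2)))))
  have hmono' : ∀ u ∈ S1, ∀ v ∈ S1, u ≠ v →
      χ (insert (embF R (r - 2) u) (insert (embF R (r - 2) v) (decoys R (r - 2)))) = k := by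
    intro u hu v hv huv
    rcases lt_or_gt_of_ne huv with h | h
    · exact hS1mono u hu v hv h
    · rw [Finset.insert_comm]
      exact hS1mono v hv u hu h
  refine ⟨S1.image (embF R (r - 2)), k, fun a b => insert a (insert b (decoys R (r - 2))),
    ?_, ?_, ?_⟩
  · rw [Finset.card_image_of_injective _ hembinj, hS1card]
  · rintro u hu v hv huv
    obtain ⟨u', hu', rfl⟩ := Finset.mem_image.mp hu
    obtain ⟨v', hv', rfl⟩ := Finset.mem_image.mp hv
    have huv' : u' ≠ v' := fun h => huv (by rw [h])
    have hvA : embF R (r - 2) v' ∉ decoys R (r - 2) := hembA v'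
    have huvA : embF R (r - 2) u' ∉ insert (embF R (r - 2) v') (decoys R (r - 2)) := by
      intro h
      rcases Finset.mem_insert.mp h with h | h
      · exact huv (by rw [h])
      · exact hembA u' h
    refine ⟨?_, Finset.mem_insert_self _ _,
      Finset.mem_insert_of_mem (Finset.mem_insert_self _ _), ?_, ?_⟩
    · rw [Finset.card_insert_of_notMem huvA, Finset.card_insert_of_notMem hvA, hAcard]
      omega
    · exact hmono' u' hu' v' hv' huv'
    · exact Finset.insert_comm _ _ _
  · rintro u hu v hv u' hu' v' hv' huv hu'v' hEE
    have hSA : ∀ x, x ∈ S1.image (embF R (r - 2)) → x ∉ decoys R (r - 2) := by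
      rintro x hx hxA
      obtain ⟨w, -, rfl⟩ := Finset.mem_image.mp hx
      exact hembA w hxA
    have hmem : ∀ x y z w : Fin (R + (r - 2)), x ∈ S1.image (embF R (r - 2)) →
        y ∈ S1.image (embF R (r - 2)) →
        insert x (insert y (decoys R (r - 2))) = insert z (insert w (decoys R (r - 2))) →
        x ∈ ({z, w} : Finset (Fin (R + (r - 2)))) ∧
          y ∈ ({z, w} : Finset (Fin (R + (r - 2)))) := by
      intro x y z w hx hy hzw
      constructor
      · have : x ∈ insert z (insert w (decoys R (r - 2))) := by
          rw [← hzw]; exact Finset.mem_insert_self _ _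
        rcases Finset.mem_insert.mp this with rfl | h
        · simp
        · rcases Finset.mem_insert.mp h with rfl | h
          · simp
          · exact absurd h (hSA x hx)
      · have : y ∈ insert z (insert w (decoys R (r - 2))) := by
          rw [← hzw]; exact Finset.mem_insert_of_mem (Finset.mem_insert_self _ _)
        rcases Finset.mem_insert.mp this with rfl | h
        · simp
        · rcases Finset.mem_insert.mp h with rfl | h
          · simp
          · exact absurd h (hSA y hy)
    have h1 := hmem u v u' v' hu hv hEE
    have h2 := hmem u' v' u v hu' hv' hEE.symm
    apply Finset.Subset.antisymm
    · intro x hx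
      rcases Finset.mem_insert.mp hx with rfl | hx
      · exact h1.1
      · rw [Finset.mem_singleton.mp hx]; exact h1.2
    · intro x hx
      rcases Finset.mem_insert.mp hx with rfl | hx
      · exact h2.1
      · rw [Finset.mem_singleton.mp hx]; exact h2.2

/-- For `r ≥ 3`, `c = C(r,2)+1`, `n ≥ c` and `N ≤ (1+1/r²)^(n-1)`, there is a
`c`-coloring of the `r`-subsets of `[N]` with no monochromatic Berge-`K_n`;
consequently `R_r(Berge-K_n; c) > (1+1/r²)^(n-1)`. -/
theorem stmt6 (r c n : ℕ) (hr : 3 ≤ r) (hc : c = r.choose 2 + 1) (hn : c ≤ n) :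
    (∀ N : ℕ, (N : ℝ) ≤ (1 + 1 / (r : ℝ) ^ 2) ^ (n - 1) →
      ∃ χ : Finset (Fin N) → Fin c, ¬ HasMonoBerge r n c N χ) ∧
    (1 + 1 / (r : ℝ) ^ 2) ^ (n - 1) < (bergeRamsey r n c : ℝ) := by
  have hpart1 : ∀ N : ℕ, (N : ℝ) ≤ (1 + 1 / (r : ℝ) ^ 2) ^ (n - 1) →
      ∃ χ : Finset (Fin N) → Fin c, ¬ HasMonoBerge r n c N χ :=
    fun N hN => part1 r c n N hr hc hn hN
  refine ⟨hpart1, ?_⟩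
  have hc0 : 0 < c := by omega
  obtain ⟨N0, hN0⟩ := exists_upper r c n hr hc0
  have hne : {N | ∀ χ : Finset (Fin N) → Fin c, HasMonoBerge r n c N χ}.Nonempty := ⟨N0, hN0⟩
  have hmem : ∀ χ : Finset (Fin (bergeRamsey r n c)) → Fin c,
      HasMonoBerge r n c (bergeRamsey r n c) χ := Nat.sInf_mem hne
  by_contra hle
  push_neg at hle
  obtain ⟨χ, hχ⟩ := hpart1 (bergeRamsey r n c) hle
  exact hχ (hmem χ)
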